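/- Consider n nodes arranged in a circle, each assigned a type in {α, β}, with window parameter w and tolerance τ ≤ 1/2. Define the harmony index H of a configuration to be the sum over all nodes u of the number of nodes in the neighbourhood N(u) = [u-w, u+w] (of size 2w+1, indices mod n) having the same type as u. If a single unhappy node changes type in such a way that after the change it has strictly more nodes of its new type in its neighbourhood than it previously had of its old type, then the harmony index strictly increases. -/

import Mathlib

/-- The harmony index: the sum over all nodes `u` of the number of nodes in
the neighbourhood `[u-w, u+w]` having the same type as `u`. -/
noncomputable def harmonyIndex (n w : ℕ) [NeZero n] (c : ZMod n → Bool) : ℕ :=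
  ∑ u : ZMod n,
    ((Finset.Icc (-(w:ℤ)) (w:ℤ)).filter (fun i : ℤ => c (u + (i : ZMod n)) = c u)).card

theorem harmony_index_increases
    (n w : ℕ) [NeZero n] (τ : ℝ) (hτ : τ ≤ 1/2)
    (c : ZMod n → Bool) (u : ZMod n)
    (hunhappy :
      ((((Finset.Icc (-(w:ℤ)) (w:ℤ)).filter
          (fun i : ℤ => c (u + (i : ZMod n)) = c u)).card : ℝ) < τ * (2*(w:ℝ)+1)))
    (c' : ZMod n → Bool) (hc' : c' = Function.update c u (!c u))
    (hmore :
      ((Finset.Icc (-(w:ℤ)) (w:ℤ)).filter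
          (fun i : ℤ => c (u + (i : ZMod n)) = c u)).card <
        ((Finset.Icc (-(w:ℤ)) (w:ℤ)).filter
          (fun i : ℤ => c' (u + (i : ZMod n)) = c' u)).card) :
    harmonyIndex n w c < harmonyIndex n w c' := by
  classical
  have hcu : c' u = !c u := by rw [hc']; simp
  have hcv : ∀ v : ZMod n, v ≠ u → c' v = c v := by
    intro v hv; rw [hc']; exact Function.update_of_ne hv _ _
  set I : Finset ℤ := Finset.Icc (-(w:ℤ)) (w:ℤ) with hIdef
  -- integer forms of the harmony index
  have hH : ∀ f : ZMod n → Bool, (harmonyIndex n w f : ℤ)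
      = ∑ v : ZMod n, ∑ i ∈ I,
          (if f (v + (i:ZMod n)) = f v then (1:ℤ) else 0) := by
    intro f
    rw [harmonyIndex]
    push_cast [Finset.card_filter]
    rfl
  -- the per-node counts at u
  set A : ℤ := ∑ i ∈ I, (if c (u + (i:ZMod n)) = c u then (1:ℤ) else 0) with hAdef
  set A' : ℤ := ∑ i ∈ I, (if c' (u + (i:ZMod n)) = c' u then (1:ℤ) else 0) with hA'def
  have hAA' : A < A' := by
    have h1 : ((I.filter (fun i : ℤ => c (u + (i : ZMod n)) = c u)).card : ℤ) = A := by
      rw [hAdef, Finset.card_filter]; push_cast; rfl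
    have h2 : ((I.filter (fun i : ℤ => c' (u + (i : ZMod n)) = c' u)).card : ℤ) = A' := by
      rw [hA'def, Finset.card_filter]; push_cast; rfl
    rw [← h1, ← h2]
    exact_mod_cast hmore
  -- the elementary difference function
  set d : ZMod n → ℤ := fun z =>
    (if c (u + z) = !c u then (1:ℤ) else 0) - (if c (u + z) = c u then 1 else 0) with hddef
  -- split I into the "zero mod n" part and the rest
  set I1 : Finset ℤ := I.filter (fun i : ℤ => (i : ZMod n) ≠ 0) with hI1def
  have hsplit : ∀ g : ℤ → ℤ, ∑ i ∈ I, g i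
      = ∑ i ∈ I.filter (fun i : ℤ => (i : ZMod n) = 0), g i + ∑ i ∈ I1, g i := by
    intro g
    rw [hI1def, Finset.sum_filter_add_sum_filter_not]
  -- A' - A in terms of d
  have hdiff : A' - A = ∑ i ∈ I1, d (i : ZMod n) := by
    rw [hAdef, hA'def, hsplit, hsplit]
    have e0 : ∀ i ∈ I.filter (fun i : ℤ => (i : ZMod n) = 0),
        (if c' (u + (i:ZMod n)) = c' u then (1:ℤ) else 0) = 1 := by
      intro i hi
      rw [Finset.mem_filter] at hi
      rw [hi.2]; simp
    have e0' : ∀ i ∈ I.filter (fun i : ℤ => (i : ZMod n) = 0),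
        (if c (u + (i:ZMod n)) = c u then (1:ℤ) else 0) = 1 := by
      intro i hi
      rw [Finset.mem_filter] at hi
      rw [hi.2]; simp
    rw [Finset.sum_congr rfl e0, Finset.sum_congr rfl e0']
    have e1 : ∀ i ∈ I1, (if c' (u + (i:ZMod n)) = c' u then (1:ℤ) else 0)
        = (if c (u + (i:ZMod n)) = !c u then (1:ℤ) else 0) := by
      intro i hi
      rw [hI1def, Finset.mem_filter] at hi
      have hne : u + (i:ZMod n) ≠ u := by
        simpa using hi.2
      rw [hcv _ hne, hcu]
    rw [Finset.sum_congr rfl e1, hddef]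
    rw [Finset.sum_sub_distrib]
    ring
  -- per-i difference of the column sums
  have hDzero : ∀ i : ℤ, (i : ZMod n) = 0 →
      (∑ v : ZMod n, ((if c' (v + (i:ZMod n)) = c' v then (1:ℤ) else 0)
        - (if c (v + (i:ZMod n)) = c v then 1 else 0))) = 0 := by
    intro i hi
    apply Finset.sum_eq_zero
    intro v _
    rw [hi]; simp
  have hDne : ∀ i : ℤ, (i : ZMod n) ≠ 0 →
      (∑ v : ZMod n, ((if c' (v + (i:ZMod n)) = c' v then (1:ℤ) else 0)
        - (if c (v + (i:ZMod n)) = c v then 1 else 0)))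
      = d (i : ZMod n) + d (-(i : ZMod n)) := by
    intro i hi
    set h : ZMod n → ℤ := fun v =>
      (if c' (v + (i:ZMod n)) = c' v then (1:ℤ) else 0)
        - (if c (v + (i:ZMod n)) = c v then 1 else 0) with hhdef
    have hne : u ≠ u - (i : ZMod n) := by
      intro h'
      apply hi
      have h2 : u + (i : ZMod n) = u := (eq_sub_iff_add_eq.mp h')
      simpa using h2
    have hzero : ∀ v : ZMod n, v ∉ ({u, u - (i:ZMod n)} : Finset (ZMod n)) → h v = 0 := by
      intro v hv
      rw [Finset.mem_insert, Finset.mem_singleton] at hv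
      push_neg at hv
      have hv1 : v ≠ u := hv.1
      have hv2 : v + (i:ZMod n) ≠ u := by
        intro h'
        exact hv.2 (by rw [← h']; ring)
      rw [hhdef]
      simp only [hcv _ hv1, hcv _ hv2, sub_self]
    have hsum : ∑ v : ZMod n, h v = h u + h (u - (i:ZMod n)) := by
      rw [← Finset.sum_pair hne]
      exact (Finset.sum_subset (Finset.subset_univ _) (fun v _ hv => hzero v hv)).symm
    have hu : h u = d (i : ZMod n) := by
      have hne2 : u + (i:ZMod n) ≠ u := by simpa using hi
      rw [hhdef, hddef]
      simp only [hcv _ hne2, hcu]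
    have hui : h (u - (i:ZMod n)) = d (-(i : ZMod n)) := by
      have h1 : u - (i:ZMod n) + (i:ZMod n) = u := by ring
      have h2 : u - (i:ZMod n) ≠ u := fun hx => hne hx.symm
      have h3 : u + -(i:ZMod n) = u - (i:ZMod n) := by ring
      rw [hhdef, hddef]
      simp only [h1, h3, hcv _ h2, hcu]
      congr 1
      · exact if_congr ⟨fun e => e.symm, fun e => e.symm⟩ rfl rfl
      · exact if_congr ⟨fun e => e.symm, fun e => e.symm⟩ rfl rfl
    rw [hsum, hu, hui]
  -- reindexing by negation on I1
  have hneg : ∑ i ∈ I1, d (-(i : ZMod n)) = ∑ i ∈ I1, d (i : ZMod n) := by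
    apply Finset.sum_equiv (Equiv.neg ℤ)
    · intro i
      simp only [hI1def, hIdef, Finset.mem_filter, Finset.mem_Icc, Equiv.neg_apply,
        Int.cast_neg, neg_ne_zero]
      constructor <;> rintro ⟨⟨h1, h2⟩, h3⟩ <;> exact ⟨⟨by omega, by omega⟩, h3⟩
    · intro i _
      simp
  -- the main identity
  have main : (harmonyIndex n w c' : ℤ) - harmonyIndex n w c = 2 * (A' - A) := by
    rw [hH, hH, ← Finset.sum_sub_distrib]
    simp_rw [← Finset.sum_sub_distrib]
    rw [Finset.sum_comm, hsplit]
    rw [Finset.sum_congr rfl (fun i hi => hDzero i (Finset.mem_filter.mp hi).2)]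
    rw [Finset.sum_congr rfl (fun i hi => hDne i (Finset.mem_filter.mp hi).2)]
    rw [Finset.sum_add_distrib, hneg, hdiff]
    simp
    ring
  have : (harmonyIndex n w c : ℤ) < harmonyIndex n w c' := by
    nlinarith [hAA', main]
  exact_mod_cast this
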